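/- Pairing of probabilities for the half-line walk: for θ ≠ 0, π and all t ≥ 1, 1 ≤ m ≤ t-1, P(X_{2t}^{HL} = 2(t-m)) = P(X_{2t}^{HL} = 2(t-m)-1), and for all t ≥ 0, 1 ≤ m ≤ t, P(X_{2t+1}^{HL} = 2(t-m)+1) = P(X_{2t+1}^{HL} = 2(t-m)); i.e. the probability distribution P(X_t^{HL}=·) takes equal values on consecutive position pairs determined by the parity of t. -/

import Mathlib

noncomputable def halfWalk (θ : ℝ) : ℕ → (ℕ → ℂ) × (ℕ → ℂ)
  | 0 =>
      (fun x => if x = 0 then Complex.exp (-(θ : ℂ) * Complex.I) / (Real.sqrt 2 : ℂ) else 0,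
       fun x => if x = 0 then Complex.I * Complex.exp (-(θ : ℂ) * Complex.I) / (Real.sqrt 2 : ℂ) else 0)
  | t + 1 =>
      (fun x => (Real.cos θ : ℂ) * (halfWalk θ t).1 (x + 1) + (Real.sin θ : ℂ) * (halfWalk θ t).2 (x + 1),
       fun x =>
         if x = 0 then (Real.cos θ : ℂ) * (halfWalk θ t).1 0 + (Real.sin θ : ℂ) * (halfWalk θ t).2 0
         else (Real.sin θ : ℂ) * (halfWalk θ t).1 (x - 1) - (Real.cos θ : ℂ) * (halfWalk θ t).2 (x - 1))

lemma halfWalk_pair (θ : ℝ) (t : ℕ) :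
    (∀ x : ℕ, (x + t) % 2 = 1 →
      (halfWalk θ t).1 (x+1) = -Complex.I * (halfWalk θ t).1 x ∧
      (halfWalk θ t).2 (x+1) = -Complex.I * (halfWalk θ t).2 x) ∧
    (t % 2 = 0 → (halfWalk θ t).2 0 = Complex.I * (halfWalk θ t).1 0) := by
  induction t with
  | zero =>
      constructor
      · intro x hx
        have hx0 : x ≠ 0 := by omega
        simp [halfWalk, hx0]
      · intro _
        simp [halfWalk]
        ring
  | succ t ih =>
      obtain ⟨hP, hQ⟩ := ih
      have hstep : ∀ x : ℕ, (x + (t+1)) % 2 = 1 →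
          (halfWalk θ (t+1)).1 (x+1) = -Complex.I * (halfWalk θ (t+1)).1 x ∧
          (halfWalk θ (t+1)).2 (x+1) = -Complex.I * (halfWalk θ (t+1)).2 x := by
        intro x hx
        constructor
        · have h1 := hP (x+1) (by omega)
          simp only [halfWalk]
          rw [h1.1, h1.2]
          ring
        · rcases Nat.eq_zero_or_pos x with h0 | hpos
          · subst h0
            have ht : t % 2 = 0 := by omega
            have hq := hQ ht
            have e1 : (halfWalk θ (t+1)).2 1
                = (Real.sin θ : ℂ) * (halfWalk θ t).1 0 - (Real.cos θ : ℂ) * (halfWalk θ t).2 0 := by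
              simp [halfWalk]
            have e0 : (halfWalk θ (t+1)).2 0
                = (Real.cos θ : ℂ) * (halfWalk θ t).1 0 + (Real.sin θ : ℂ) * (halfWalk θ t).2 0 := by
              simp [halfWalk]
            rw [e1, e0, hq]
            ring_nf
            rw [Complex.I_sq]
            ring
          · obtain ⟨y, rfl⟩ := Nat.exists_eq_succ_of_ne_zero (by omega : x ≠ 0)
            have h1 := hP y (by omega)
            simp only [halfWalk, Nat.succ_ne_zero, if_false, Nat.succ_sub_one]
            rw [h1.1, h1.2]
            ring
      refine ⟨hstep, ?_⟩
      intro ht1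
      have ht : (0 + t) % 2 = 1 := by omega
      have h1 := hP 0 ht
      simp only [zero_add] at h1
      have e0 : (halfWalk θ (t+1)).2 0
          = (Real.cos θ : ℂ) * (halfWalk θ t).1 0 + (Real.sin θ : ℂ) * (halfWalk θ t).2 0 := by
        simp [halfWalk]
      have e1 : (halfWalk θ (t+1)).1 0
          = (Real.cos θ : ℂ) * (halfWalk θ t).1 1 + (Real.sin θ : ℂ) * (halfWalk θ t).2 1 := by
        simp [halfWalk]
      rw [e0, e1, h1.1, h1.2]
      ring_nf
      rw [Complex.I_sq]
      ring

lemma abs_pair (θ : ℝ) (t x : ℕ) (hx : (x + t) % 2 = 1) :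
    ‖(halfWalk θ t).1 (x+1)‖ ^ 2 + ‖(halfWalk θ t).2 (x+1)‖ ^ 2
      = ‖(halfWalk θ t).1 x‖ ^ 2 + ‖(halfWalk θ t).2 x‖ ^ 2 := by
  obtain ⟨h1, h2⟩ := (halfWalk_pair θ t).1 x hx
  rw [h1, h2]
  simp [map_mul]

theorem half_line_probability_pairing (θ : ℝ) (h0 : θ ≠ 0) (hπ : θ ≠ Real.pi) :
    (∀ t : ℕ, 1 ≤ t → ∀ m : ℕ, 1 ≤ m → m ≤ t - 1 →
        ‖(halfWalk θ (2 * t)).1 (2 * (t - m))‖ ^ 2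
            + ‖(halfWalk θ (2 * t)).2 (2 * (t - m))‖ ^ 2
          = ‖(halfWalk θ (2 * t)).1 (2 * (t - m) - 1)‖ ^ 2
            + ‖(halfWalk θ (2 * t)).2 (2 * (t - m) - 1)‖ ^ 2) ∧
    (∀ t : ℕ, ∀ m : ℕ, 1 ≤ m → m ≤ t →
        ‖(halfWalk θ (2 * t + 1)).1 (2 * (t - m) + 1)‖ ^ 2
            + ‖(halfWalk θ (2 * t + 1)).2 (2 * (t - m) + 1)‖ ^ 2
          = ‖(halfWalk θ (2 * t + 1)).1 (2 * (t - m))‖ ^ 2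
            + ‖(halfWalk θ (2 * t + 1)).2 (2 * (t - m))‖ ^ 2) := by
  constructor
  · intro t ht m hm hmt
    have hk : 1 ≤ t - m := by omega
    have he : 2 * (t - m) = (2 * (t - m) - 1) + 1 := by omega
    rw [he]
    exact abs_pair θ (2 * t) (2 * (t - m) - 1) (by omega)
  · intro t m hm hmt
    exact abs_pair θ (2 * t + 1) (2 * (t - m)) (by omega)
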